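/- Let a ∈ (0,1] and let S ⊆ Lim(ω₁) be stationary. If ♣_S^{inf≥a} holds, then there exists a partition ⟨S_i : i < ω₁⟩ of S into pairwise disjoint stationary sets such that for every i < ω₁ the principle ♣_{S_i}^{inf≥a} holds. -/

import Mathlib

open Filter Set

noncomputable def omega1 : Ordinal.{0} := (Cardinal.aleph 1).ord

/-- The set of countable limit ordinals, `Lim(ω₁)`. -/
def limOmega1 : Set Ordinal.{0} := {δ | δ < omega1 ∧ Order.IsSuccLimit δ}

/-- `C` is a closed unbounded subset of `ω₁`. -/
def IsClubIn (C : Set Ordinal.{0}) : Prop :=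
  C ⊆ Set.Iio omega1 ∧
  (∀ δ, δ < omega1 → Order.IsSuccLimit δ → (∀ β < δ, ∃ γ ∈ C, β < γ ∧ γ < δ) → δ ∈ C) ∧
  (∀ β, β < omega1 → ∃ γ ∈ C, β < γ)

/-- `S` is a stationary subset of `ω₁`. -/
def IsStatIn (S : Set Ordinal.{0}) : Prop :=
  S ⊆ Set.Iio omega1 ∧ ∀ C, IsClubIn C → (S ∩ C).Nonempty

open scoped Classical in
/-- `|{k < n : α k ∈ A}| / n` as a real number. -/
noncomputable def hitRatio (α : ℕ → Ordinal.{0}) (A : Set Ordinal.{0}) (n : ℕ) : ℝ :=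
  ((Finset.range n).filter (fun k => α k ∈ A)).card / n

/-- `α` assigns to each `δ ∈ S` a strictly increasing sequence cofinal in `δ`. -/
def GoodSeq (S : Set Ordinal.{0}) (α : Ordinal.{0} → ℕ → Ordinal.{0}) : Prop :=
  ∀ δ ∈ S, StrictMono (α δ) ∧ (∀ n, α δ n < δ) ∧ (∀ β < δ, ∃ n, β < α δ n)

/-- The principle `♣_S^{inf ≥ a}`. -/
def ClubSuitInf (S : Set Ordinal.{0}) (a : ℝ) : Prop :=
  ∃ α : Ordinal.{0} → ℕ → Ordinal.{0}, GoodSeq S α ∧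
    ∀ A : Set Ordinal.{0}, A ⊆ Set.Iio omega1 → ¬ A.Countable →
      ∃ δ ∈ S, a ≤ Filter.liminf (hitRatio (α δ) A) Filter.atTop

/-- The principle `♣_S^{sup ≥ a}`. -/
def ClubSuitSup (S : Set Ordinal.{0}) (a : ℝ) : Prop :=
  ∃ α : Ordinal.{0} → ℕ → Ordinal.{0}, GoodSeq S α ∧
    ∀ A : Set Ordinal.{0}, A ⊆ Set.Iio omega1 → ¬ A.Countable →
      ∃ δ ∈ S, a ≤ Filter.limsup (hitRatio (α δ) A) Filter.atTop

/-- The diamond principle `◊` on `ω₁`. -/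
def DiamondOmega1 : Prop :=
  ∃ B : Ordinal.{0} → Set Ordinal.{0}, (∀ δ ∈ limOmega1, B δ ⊆ Set.Iio δ) ∧
    ∀ A : Set Ordinal.{0}, A ⊆ Set.Iio omega1 →
      IsStatIn {δ ∈ limOmega1 | A ∩ Set.Iio δ = B δ}


noncomputable def ld (α : Ordinal.{0} → ℕ → Ordinal.{0}) (δ : Ordinal.{0}) (B : Set Ordinal.{0}) : ℝ :=
  Filter.liminf (hitRatio (α δ) B) Filter.atTop

lemma hitRatio_nonneg (α : ℕ → Ordinal) (A : Set Ordinal) (n : ℕ) : 0 ≤ hitRatio α A n := by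
  unfold hitRatio; positivity

lemma hitRatio_le_one (α : ℕ → Ordinal) (A : Set Ordinal) (n : ℕ) : hitRatio α A n ≤ 1 := by
  classical
  unfold hitRatio
  rcases Nat.eq_zero_or_pos n with h | h
  · simp [h]
  · rw [div_le_one (by exact_mod_cast h)]
    exact_mod_cast (Finset.card_filter_le _ _).trans (by simp)

lemma hitRatio_mono (α : ℕ → Ordinal) {A B : Set Ordinal} (h : A ⊆ B) (n : ℕ) :
    hitRatio α A n ≤ hitRatio α B n := by
  classical
  unfold hitRatio
  rcases Nat.eq_zero_or_pos n with h0 | h0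
  · simp [h0]
  · have hc : ((Finset.range n).filter (fun k => α k ∈ A)).card ≤ ((Finset.range n).filter (fun k => α k ∈ B)).card :=
      Finset.card_le_card (by
        intro k hk; simp only [Finset.mem_filter] at *; exact ⟨hk.1, h hk.2⟩)
    gcongr

lemma bddAbove_hit (α : ℕ → Ordinal) (A : Set Ordinal) :
    Filter.IsBoundedUnder (· ≤ ·) Filter.atTop (hitRatio α A) :=
  Filter.isBoundedUnder_of ⟨1, hitRatio_le_one α A⟩

lemma bddBelow_hit (α : ℕ → Ordinal) (A : Set Ordinal) :
    Filter.IsBoundedUnder (· ≥ ·) Filter.atTop (hitRatio α A) :=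
  Filter.isBoundedUnder_of ⟨0, hitRatio_nonneg α A⟩

lemma ld_mono (α : Ordinal → ℕ → Ordinal) (δ : Ordinal) {A B : Set Ordinal} (h : A ⊆ B) :
    ld α δ A ≤ ld α δ B :=
  Filter.liminf_le_liminf (Filter.Eventually.of_forall (hitRatio_mono _ h))
    (bddBelow_hit _ _) ((bddAbove_hit _ _).isCoboundedUnder_ge)

lemma ld_eventually_gt (α : Ordinal → ℕ → Ordinal) (δ : Ordinal) (B : Set Ordinal) {a b : ℝ}
    (hab : b < a) (h : a ≤ ld α δ B) : ∀ᶠ n in Filter.atTop, b < hitRatio (α δ) B n :=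
  Filter.eventually_lt_of_lt_liminf (lt_of_lt_of_le hab h) (bddBelow_hit _ _)

lemma le_ld_of_forall (α : Ordinal → ℕ → Ordinal) (δ : Ordinal) (B : Set Ordinal) {a : ℝ}
    (h : ∀ b < a, ∀ᶠ n in Filter.atTop, b ≤ hitRatio (α δ) B n) : a ≤ ld α δ B := by
  refine le_of_forall_pos_le_add fun ε hε => ?_
  have := Filter.le_liminf_of_le ((bddAbove_hit (α δ) B).isCoboundedUnder_ge)
    (h (a - ε) (by linarith))
  unfold ld; linarith

lemma hits_infinite (α : Ordinal → ℕ → Ordinal) (δ : Ordinal) (B : Set Ordinal) {a : ℝ}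
    (ha : 0 < a) (h : a ≤ ld α δ B) : {n | α δ n ∈ B}.Infinite := by
  classical
  by_contra hfin'
  rw [Set.not_infinite] at hfin'
  set K := hfin'.toFinset.card with hK
  have hbound : ∀ n, hitRatio (α δ) B n ≤ (K : ℝ) / n := by
    intro n
    rcases Nat.eq_zero_or_pos n with h0 | h0
    · simp [h0, hitRatio]
    · unfold hitRatio
      have hsub : (Finset.range n).filter (fun k => α δ k ∈ B) ⊆ hfin'.toFinset := by
        intro k hk
        simp only [Finset.mem_filter] at hk
        simpa using hk.2
      have hc : ((Finset.range n).filter (fun k => α δ k ∈ B)).card ≤ K :=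
        Finset.card_le_card hsub
      gcongr
  have h0 : Filter.liminf (fun n : ℕ => (K : ℝ) / n) Filter.atTop = 0 :=
    (tendsto_const_div_atTop_nhds_zero_nat (K:ℝ)).liminf_eq
  have : ld α δ B ≤ 0 := by
    rw [← h0]
    exact Filter.liminf_le_liminf (Filter.Eventually.of_forall hbound)
      (bddBelow_hit _ _) (Filter.isCoboundedUnder_ge_of_le _ (x := (K:ℝ)) (fun n => by
        rcases Nat.eq_zero_or_pos n with h0 | h0
        · simp [h0]
        · exact div_le_self (Nat.cast_nonneg _) (by exact_mod_cast h0)))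
  linarith

lemma hitRatio_union_sum {r : ℕ} (α : ℕ → Ordinal) (B : Fin r → Set Ordinal)
    (hdisj : Pairwise (Function.onFun Disjoint B)) (n : ℕ) :
    hitRatio α (⋃ j, B j) n = ∑ j, hitRatio α (B j) n := by
  classical
  unfold hitRatio
  rw [← Finset.sum_div]
  congr 1
  have : (Finset.range n).filter (fun k => α k ∈ ⋃ j, B j)
      = Finset.univ.biUnion (fun j : Fin r => (Finset.range n).filter (fun k => α k ∈ B j)) := by
    ext k
    simp only [Finset.mem_filter, Finset.mem_biUnion, Finset.mem_univ, Set.mem_iUnion,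
      true_and]
    tauto
  rw [this, Finset.card_biUnion]
  · push_cast; ring
  · intro i _ j _ hij
    rw [Function.onFun, Finset.disjoint_left]
    intro k hk1 hk2
    simp only [Finset.mem_filter] at hk1 hk2
    exact Set.disjoint_left.mp (hdisj hij) hk1.2 hk2.2

lemma slots_bound {r : ℕ} (α : Ordinal → ℕ → Ordinal) (δ : Ordinal) (B : Fin r → Set Ordinal)
    (hdisj : Pairwise (Function.onFun Disjoint B)) {a : ℝ} (ha : 0 < a)
    (h : ∀ j, a ≤ ld α δ (B j)) : (r : ℝ) * a ≤ 1 := by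
  rcases Nat.eq_zero_or_pos r with h0 | h0
  · simp [h0]
  by_contra hc
  push_neg at hc
  have hr : (0:ℝ) < r := by exact_mod_cast h0
  set b : ℝ := (a + 1 / r) / 2 with hb
  have hinvr : 1 / (r:ℝ) < a := by
    rw [div_lt_iff₀ hr]
    nlinarith
  have hba : b < a := by rw [hb]; linarith
  have hrb : 1 < (r:ℝ) * b := by
    rw [hb]
    have : (r:ℝ) * (1/r) = 1 := by field_simp
    nlinarith
  have hev : ∀ᶠ n in Filter.atTop, ∀ j : Fin r, b < hitRatio (α δ) (B j) n := by
    rw [Filter.eventually_all]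
    exact fun j => ld_eventually_gt α δ (B j) hba (h j)
  obtain ⟨n, hn⟩ := hev.exists
  have hsum : ∑ j : Fin r, hitRatio (α δ) (B j) n ≤ 1 := by
    rw [← hitRatio_union_sum (α δ) B hdisj n]
    exact hitRatio_le_one _ _ _
  have : (r:ℝ) * b < ∑ j : Fin r, hitRatio (α δ) (B j) n := by
    have hne : (Finset.univ : Finset (Fin r)).Nonempty := by
      simpa [Finset.univ_nonempty_iff] using Fin.pos_iff_nonempty.mp h0
    calc (r:ℝ) * b = ∑ _j : Fin r, b := by simp [Finset.sum_const, mul_comm]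
    _ < _ := Finset.sum_lt_sum_of_nonempty hne (fun j _ => hn j)
  linarith

lemma omega1_isLimit : Order.IsSuccLimit omega1 := Cardinal.isSuccLimit_ord (Cardinal.aleph0_le_aleph 1)

lemma omega1_pos : 0 < omega1 := omega1_isLimit.pos

lemma countable_Iio {γ : Ordinal.{0}} (hγ : γ < omega1) : (Set.Iio γ).Countable := by
  rw [Cardinal.countable_iff_lt_aleph_one, Ordinal.mk_Iio_ordinal]
  have h1 : Cardinal.lift.{1,0} (Cardinal.aleph.{0} 1) = Cardinal.aleph.{1} 1 := by
    rw [Cardinal.lift_aleph, Ordinal.lift_one]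
  rw [← h1, Cardinal.lift_lt]
  rwa [omega1, Cardinal.lt_ord] at hγ

lemma succ_lt_omega1 {γ : Ordinal.{0}} (hγ : γ < omega1) : γ + 1 < omega1 := by
  rw [Ordinal.add_one_eq_succ]
  exact omega1_isLimit.succ_lt hγ

lemma countable_bounded {B : Set Ordinal.{0}} (hB : B ⊆ Set.Iio omega1) (hc : B.Countable) :
    ∃ η < omega1, ∀ x ∈ B, x < η := by
  rcases B.eq_empty_or_nonempty with rfl | hne
  · exact ⟨1, (by simpa using omega1_isLimit.succ_lt omega1_pos), by simp⟩
  obtain ⟨g, hg⟩ := Set.Countable.exists_eq_range hc hne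
  refine ⟨⨆ n, g n + 1, ?_, ?_⟩
  · apply Ordinal.iSup_lt_ord
    · rw [Cardinal.mk_denumerable]
      unfold omega1
      rw [Cardinal.isRegular_aleph_one.cof_eq]
      exact Cardinal.aleph0_lt_aleph_one
    · intro n
      have : g n ∈ B := by rw [hg]; exact ⟨n, rfl⟩
      exact succ_lt_omega1 (hB this)
  · intro x hx
    rw [hg] at hx
    obtain ⟨n, rfl⟩ := hx
    have h1 : g n < g n + 1 := by
      rw [Ordinal.add_one_eq_succ]; exact Order.lt_succ _
    exact h1.trans_le (Ordinal.le_iSup (fun n => g n + 1) n)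

lemma uncountable_unbounded {B : Set Ordinal.{0}} (hB : B ⊆ Set.Iio omega1)
    (hu : ¬ B.Countable) : ∀ β < omega1, ∃ e ∈ B, β < e := by
  intro β hβ
  by_contra hcon
  push_neg at hcon
  apply hu
  apply Set.Countable.mono _ (countable_Iio (succ_lt_omega1 hβ))
  intro x hx
  exact lt_of_le_of_lt (hcon x hx) (by rw [Ordinal.add_one_eq_succ]; exact Order.lt_succ _)

lemma Iio_omega1_uncountable : ¬ (Set.Iio omega1).Countable := by
  intro hc
  obtain ⟨η, hη, hbound⟩ := countable_bounded (le_refl _) hc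
  exact absurd (hbound η hη) (lt_irrefl η)

lemma image_uncountable {f : Ordinal.{0} → Ordinal.{0}} {s : Set Ordinal.{0}}
    (hinj : Set.InjOn f s) (hs : ¬ s.Countable) : ¬ (f '' s).Countable := by
  intro hc
  exact hs (Set.countable_of_injective_of_countable_image hinj hc)

noncomputable def carve (EE C : Set Ordinal.{0}) : Ordinal.{0} → Ordinal.{0} :=
  Ordinal.lt_wf.fix fun η rec =>
    sInf {e | e ∈ EE ∧ ∃ c ∈ C, c < e ∧ ∀ ζ, ∀ h : ζ < η, rec ζ h < c}

lemma carve_eq (EE C : Set Ordinal.{0}) (η : Ordinal.{0}) :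
    carve EE C η = sInf {e | e ∈ EE ∧ ∃ c ∈ C, c < e ∧ ∀ ζ < η, carve EE C ζ < c} := by
  rw [carve, Ordinal.lt_wf.fix_eq]

lemma carve_spec {EE C : Set Ordinal.{0}} (hEE : EE ⊆ Set.Iio omega1)
    (hEEu : ¬ EE.Countable) (hC : IsClubIn C) :
    ∀ η < omega1, carve EE C η ∈ EE ∧ ∃ c ∈ C, c < carve EE C η ∧ ∀ ζ < η, carve EE C ζ < c := by
  intro η hη
  induction η using Ordinal.induction with
  | _ η IH =>
  have hne : {e | e ∈ EE ∧ ∃ c ∈ C, c < e ∧ ∀ ζ < η, carve EE C ζ < c}.Nonempty := by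
    have hprev : (carve EE C '' Set.Iio η).Countable ∧ carve EE C '' Set.Iio η ⊆ Set.Iio omega1 := by
      constructor
      · exact Set.Countable.image (countable_Iio hη) _
      · rintro x ⟨ζ, hζ, rfl⟩
        exact hEE (IH ζ hζ (hζ.trans hη)).1
    obtain ⟨η₀, hη₀, hbd⟩ := countable_bounded hprev.2 hprev.1
    obtain ⟨c, hcC, hc⟩ := hC.2.2 η₀ hη₀
    obtain ⟨e, heE, hce⟩ := uncountable_unbounded hEE hEEu c (hC.1 hcC)
    refine ⟨e, heE, c, hcC, hce, ?_⟩
    intro ζ hζ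
    exact lt_trans (hbd _ ⟨ζ, hζ, rfl⟩) hc
  have := csInf_mem hne
  rw [← carve_eq] at this
  exact ⟨this.1, this.2⟩

lemma carve_strictMonoOn {EE C : Set Ordinal.{0}} (hEE : EE ⊆ Set.Iio omega1)
    (hEEu : ¬ EE.Countable) (hC : IsClubIn C) :
    StrictMonoOn (carve EE C) (Set.Iio omega1) := by
  intro ζ hζ η hη hlt
  obtain ⟨_, c, _, hce, hall⟩ := carve_spec hEE hEEu hC η hη
  exact lt_trans (hall ζ hlt) hce

lemma thin_capture {EE C : Set Ordinal.{0}} (hEE : EE ⊆ Set.Iio omega1)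
    (hEEu : ¬ EE.Countable) (hC : IsClubIn C) {δ : Ordinal.{0}} (hδ : δ < omega1)
    (hlim : Order.IsSuccLimit δ)
    (hcof : ∀ β < δ, ∃ x ∈ carve EE C '' Set.Iio omega1, β < x ∧ x < δ) : δ ∈ C := by
  apply hC.2.1 δ hδ hlim
  intro β hβ
  obtain ⟨x₁, ⟨η₁, hη₁, rfl⟩, hβx₁, hx₁δ⟩ := hcof β hβ
  obtain ⟨x₂, ⟨η₂, hη₂, rfl⟩, hx₁x₂, hx₂δ⟩ := hcof _ hx₁δ
  have hηlt : η₁ < η₂ := by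
    rcases lt_trichotomy η₁ η₂ with h | h | h
    · exact h
    · exact absurd (h ▸ hx₁x₂) (lt_irrefl _)
    · exact absurd (lt_trans hx₁x₂ (carve_strictMonoOn hEE hEEu hC hη₂ hη₁ h)) (lt_irrefl _)
  obtain ⟨_, c, hcC, hc₂, hall⟩ := carve_spec hEE hEEu hC η₂ hη₂
  exact ⟨c, hcC, lt_trans hβx₁ (hall η₁ hηlt), lt_trans hc₂ hx₂δ⟩

lemma closure_point (step : Ordinal.{0} → Ordinal.{0}) (hstep : ∀ γ < omega1, step γ < omega1)
    {β : Ordinal.{0}} (hβ : β < omega1) :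
    ∃ δ, β < δ ∧ δ < omega1 ∧ Order.IsSuccLimit δ ∧ ∀ x < δ, step x < δ := by
  have hbnd : ∀ γ < omega1, ∃ η, η < omega1 ∧ γ < η ∧ ∀ x < γ, step x < η := by
    intro γ hγ
    have himg : (step '' Set.Iio γ).Countable := Set.Countable.image (countable_Iio hγ) _
    have himg2 : step '' Set.Iio γ ⊆ Set.Iio omega1 := by
      rintro y ⟨x, hx, rfl⟩
      exact hstep x (hx.trans hγ)
    obtain ⟨η₀, hη₀, hbd⟩ := countable_bounded himg2 himg
    refine ⟨max η₀ (γ + 1), ?_, ?_, ?_⟩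
    · exact max_lt hη₀ (succ_lt_omega1 hγ)
    · exact lt_of_lt_of_le (by rw [Ordinal.add_one_eq_succ]; exact Order.lt_succ _) (le_max_right _ _)
    · intro x hx
      exact lt_of_lt_of_le (hbd _ ⟨x, hx, rfl⟩) (le_max_left _ _)
  set Step : Ordinal.{0} → Ordinal.{0} := fun γ =>
    if h : γ < omega1 then Classical.choose (hbnd γ h) else 0 with hStep
  have hStepSpec : ∀ γ (h : γ < omega1),
      Step γ < omega1 ∧ γ < Step γ ∧ ∀ x < γ, step x < Step γ := by
    intro γ h
    rw [hStep]; simp only [dif_pos h]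
    exact Classical.choose_spec (hbnd γ h)
  set g : ℕ → Ordinal.{0} := fun n => Step^[n] (β + 1) with hg
  have hg0 : g 0 = β + 1 := rfl
  have hgsucc : ∀ n, g (n + 1) = Step (g n) := by
    intro n; rw [hg]; simp [Function.iterate_succ_apply']
  have hglt : ∀ n, g n < omega1 ∧ g n < g (n + 1) := by
    intro n
    induction n with
    | zero =>
      have h0 : g 0 < omega1 := by rw [hg0]; exact succ_lt_omega1 hβ
      exact ⟨h0, by rw [hgsucc]; exact (hStepSpec _ h0).2.1⟩
    | succ n IH =>
      have h1 : g (n + 1) < omega1 := by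
        rw [hgsucc]; exact (hStepSpec _ IH.1).1
      exact ⟨h1, by rw [hgsucc (n+1)]; exact (hStepSpec _ h1).2.1⟩
  refine ⟨⨆ n, g n, ?_, ?_, ?_, ?_⟩
  · calc β < β + 1 := by rw [Ordinal.add_one_eq_succ]; exact Order.lt_succ _
    _ = g 0 := hg0.symm
    _ ≤ _ := Ordinal.le_iSup g 0
  · apply Ordinal.iSup_lt_ord
    · rw [Cardinal.mk_denumerable]
      unfold omega1
      rw [Cardinal.isRegular_aleph_one.cof_eq]
      exact Cardinal.aleph0_lt_aleph_one
    · exact fun n => (hglt n).1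
  · refine (Ordinal.isSuccLimit_iff).2 ⟨?_, Order.isSuccPrelimit_of_succ_lt ?_⟩
    · intro h0
      have : β + 1 ≤ (0 : Ordinal.{0}) := by
        rw [← h0]; exact Ordinal.le_iSup g 0
      have h2 : (0:Ordinal.{0}) < β + 1 := by
        rw [Ordinal.add_one_eq_succ]
        exact Order.lt_succ_of_le (zero_le (a := β))
      exact absurd this h2.not_ge
    · intro x hx
      rw [Ordinal.lt_iSup_iff] at hx
      obtain ⟨n, hn⟩ := hx
      calc Order.succ x ≤ g n := Order.succ_le_of_lt hn
      _ < g (n + 1) := (hglt n).2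
      _ ≤ _ := Ordinal.le_iSup g (n + 1)
  · intro x hx
    rw [Ordinal.lt_iSup_iff] at hx
    obtain ⟨n, hn⟩ := hx
    calc step x < Step (g n) := (hStepSpec _ (hglt n).1).2.2 x hn
    _ = g (n + 1) := (hgsucc n).symm
    _ < g (n + 2) := (hglt (n+1)).2
    _ ≤ _ := Ordinal.le_iSup g (n + 2)

lemma club_Iio : IsClubIn (Set.Iio omega1) := by
  refine ⟨le_refl _, fun δ h _ _ => h, fun β hβ => ⟨β + 1, succ_lt_omega1 hβ, ?_⟩⟩
  rw [Ordinal.add_one_eq_succ]; exact Order.lt_succ _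

lemma club_Cb {b : Ordinal.{0} → Ordinal.{0}} (hb : ∀ x < omega1, b x < omega1) :
    IsClubIn {δ | δ < omega1 ∧ ∀ x < δ, b x < δ} := by
  refine ⟨fun δ hδ => hδ.1, ?_, ?_⟩
  · intro δ hδ hlim hdense
    refine ⟨hδ, fun x hx => ?_⟩
    obtain ⟨γ, hγmem, hxγ, hγδ⟩ := hdense x hx
    exact lt_trans (hγmem.2 x hxγ) hγδ
  · intro β hβ
    obtain ⟨δ, hβδ, hδ, _, hcl⟩ := closure_point (fun γ => if γ < omega1 then b γ else 0)
      (fun γ hγ => by simp only [if_pos hγ]; exact hb γ hγ) hβ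
    refine ⟨δ, ⟨hδ, fun x hx => ?_⟩, hβδ⟩
    have := hcl x hx
    rwa [if_pos (hx.trans hδ)] at this

lemma club_inter {C D : Set Ordinal.{0}} (hC : IsClubIn C) (hD : IsClubIn D) :
    IsClubIn (C ∩ D) := by
  refine ⟨fun δ hδ => hC.1 hδ.1, ?_, ?_⟩
  · intro δ hδ hlim hdense
    constructor
    · apply hC.2.1 δ hδ hlim
      intro β hβ
      obtain ⟨γ, hγ, h1, h2⟩ := hdense β hβ
      exact ⟨γ, hγ.1, h1, h2⟩
    · apply hD.2.1 δ hδ hlim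
      intro β hβ
      obtain ⟨γ, hγ, h1, h2⟩ := hdense β hβ
      exact ⟨γ, hγ.2, h1, h2⟩
  · intro β hβ
    have hpick : ∀ γ < omega1, ∃ η, η < omega1 ∧ (∃ c ∈ C, γ < c ∧ c ≤ η) ∧ (∃ d ∈ D, γ < d ∧ d ≤ η) := by
      intro γ hγ
      obtain ⟨c, hc, hγc⟩ := hC.2.2 γ hγ
      obtain ⟨d, hd, hγd⟩ := hD.2.2 γ hγ
      exact ⟨max c d, max_lt (hC.1 hc) (hD.1 hd),
        ⟨c, hc, hγc, le_max_left _ _⟩, ⟨d, hd, hγd, le_max_right _ _⟩⟩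
    set step : Ordinal.{0} → Ordinal.{0} := fun γ =>
      if h : γ < omega1 then Classical.choose (hpick γ h) else 0 with hstepdef
    obtain ⟨δ, hβδ, hδ, hlim, hcl⟩ := closure_point step (fun γ hγ => by
      rw [hstepdef]; simp only [dif_pos hγ]; exact (Classical.choose_spec (hpick γ hγ)).1) hβ
    have hdense : ∀ E : Set Ordinal.{0}, (∀ γ (h : γ < omega1),
        ∃ e ∈ E, γ < e ∧ e ≤ Classical.choose (hpick γ h)) →
        ∀ x < δ, ∃ e ∈ E, x < e ∧ e < δ := by
      intro E hE x hx
      obtain ⟨e, he, hxe, hest⟩ := hE x (hx.trans hδ)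
      have : step x < δ := hcl x hx
      refine ⟨e, he, hxe, lt_of_le_of_lt ?_ this⟩
      rw [hstepdef]; simp only [dif_pos (hx.trans hδ)]; exact hest
    refine ⟨δ, ⟨?_, ?_⟩, hβδ⟩
    · exact hC.2.1 δ hδ hlim (hdense C (fun γ h => (Classical.choose_spec (hpick γ h)).2.1))
    · exact hD.2.1 δ hδ hlim (hdense D (fun γ h => (Classical.choose_spec (hpick γ h)).2.2))

lemma aleph_one_univ_eq : Cardinal.lift.{1,0} (Cardinal.aleph.{0} 1) = Cardinal.aleph.{1} 1 := by
  rw [Cardinal.lift_aleph, Ordinal.lift_one]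

lemma uncountable_mk_ge {B : Set Ordinal.{0}} (hu : ¬ B.Countable) :
    Cardinal.aleph.{1} 1 ≤ Cardinal.mk B := by
  rw [Cardinal.countable_iff_lt_aleph_one] at hu
  exact le_of_not_gt hu

lemma mk_Iio_omega1 : Cardinal.mk (Set.Iio omega1) = Cardinal.aleph.{1} 1 := by
  rw [Ordinal.mk_Iio_ordinal, ← aleph_one_univ_eq]
  congr 1
  rw [omega1, Cardinal.card_ord]

lemma disjoint_subfamily {H : Set Ordinal.{0}} (hH : H ⊆ Set.Iio omega1) (hHu : ¬ H.Countable) :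
    ∃ P : Ordinal.{0} → Set Ordinal.{0},
      (∀ i < omega1, P i ⊆ H ∧ ¬ (P i).Countable) ∧
      (∀ i, ∀ j, i ≠ j → Disjoint (P i) (P j)) := by
  have hcard : Cardinal.mk (↥(Set.Iio omega1) × ↥(Set.Iio omega1)) ≤ Cardinal.mk H := by
    have h1 : Cardinal.mk (↥(Set.Iio omega1) × ↥(Set.Iio omega1))
        = Cardinal.mk (Set.Iio omega1) * Cardinal.mk (Set.Iio omega1) := by
      simp [Cardinal.mk_prod]
    rw [h1, mk_Iio_omega1, Cardinal.mul_eq_self (Cardinal.aleph0_le_aleph 1)]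
    exact uncountable_mk_ge hHu
  rw [Cardinal.le_def] at hcard
  obtain ⟨emb⟩ := hcard
  set P : Ordinal.{0} → Set Ordinal.{0} := fun i =>
    if hi : i < omega1 then
      Subtype.val '' (Set.range fun x : ↥(Set.Iio omega1) => emb (⟨i, hi⟩, x)) else ∅ with hP
  refine ⟨P, ?_, ?_⟩
  · intro i hi
    constructor
    · rw [hP]; simp only [dif_pos hi]
      rintro y ⟨z, ⟨x, rfl⟩, rfl⟩
      exact (emb (⟨i, hi⟩, x)).2
    · rw [hP]; simp only [dif_pos hi]
      intro hc
      set f : ↥(Set.Iio omega1) → Ordinal.{0} := fun x => (emb (⟨i, hi⟩, x)).val with hf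
      have hfinj : Function.Injective f := by
        intro x y hxy
        have := Subtype.val_injective hxy
        have := emb.injective this
        exact (Prod.mk.injEq _ _ _ _).mp this |>.2
      have : Subtype.val '' (Set.range fun x : ↥(Set.Iio omega1) => emb (⟨i, hi⟩, x))
          = Set.range f := by
        rw [hf, ← Set.range_comp]
        rfl
      rw [this] at hc
      have : Countable ↥(Set.range f) := hc.to_subtype
      have : Countable ↥(Set.Iio omega1) := Countable.of_equiv _ (Equiv.ofInjective f hfinj).symm
      exact Iio_omega1_uncountable (Set.countable_coe_iff.mp this)
  · intro i j hij
    rw [Set.disjoint_left]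
    intro y hyi hyj
    rw [hP] at hyi hyj
    by_cases hi : i < omega1
    · by_cases hj : j < omega1
      · simp only [dif_pos hi] at hyi
        simp only [dif_pos hj] at hyj
        obtain ⟨z, ⟨x, rfl⟩, hz⟩ := hyi
        obtain ⟨z', ⟨x', rfl⟩, hz'⟩ := hyj
        have := Subtype.val_injective (hz.trans hz'.symm)
        have := emb.injective this
        have := (Prod.mk.injEq _ _ _ _).mp this |>.1
        exact hij (congrArg Subtype.val this)
      · simp only [dif_neg hj] at hyj; exact hyj
    · simp only [dif_neg hi] at hyi; exact hyi

def Cov (a : ℝ) (α : Ordinal.{0} → ℕ → Ordinal.{0}) (W H : Set Ordinal.{0}) : Prop :=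
  ∀ B, B ⊆ H → ¬ B.Countable → ∃ δ ∈ W, a ≤ ld α δ B

def SB (a : ℝ) (α : Ordinal.{0} → ℕ → Ordinal.{0}) (H : Set Ordinal.{0}) (s : ℕ)
    (W : Set Ordinal.{0}) : Prop :=
  ∀ δ ∈ W, ∀ B : Fin (s+1) → Set Ordinal.{0}, (∀ j, B j ⊆ H) →
    Pairwise (Function.onFun Disjoint B) → ¬ ∀ j, a ≤ ld α δ (B j)

def Concl (a : ℝ) (α : Ordinal.{0} → ℕ → Ordinal.{0}) (W : Set Ordinal.{0}) : Prop :=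
  ∃ T : Ordinal.{0} → Set Ordinal.{0}, ∃ b : Ordinal.{0} → Ordinal.{0} → Ordinal.{0},
    (∀ i, i < omega1 → T i ⊆ W) ∧
    (∀ i, i < omega1 → ∀ j, j < omega1 → i ≠ j → Disjoint (T i) (T j)) ∧
    (∀ i, i < omega1 → (∀ x < omega1, b i x < omega1) ∧ StrictMonoOn (b i) (Set.Iio omega1) ∧
      ∀ A, A ⊆ Set.Iio omega1 → ¬ A.Countable → ∀ C, IsClubIn C →
        ∃ δ, δ ∈ T i ∧ δ ∈ C ∧ a ≤ ld α δ (b i '' A))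

lemma hits_cofinal {α : Ordinal.{0} → ℕ → Ordinal.{0}} {S : Set Ordinal.{0}}
    (hGS : GoodSeq S α) {δ : Ordinal.{0}} (hδ : δ ∈ S) {X : Set Ordinal.{0}}
    (hinf : {n | α δ n ∈ X}.Infinite) :
    ∀ β < δ, ∃ x ∈ X, β < x ∧ x < δ := by
  intro β hβ
  obtain ⟨hmono, hlt, hcof⟩ := hGS δ hδ
  obtain ⟨n₀, hn₀⟩ := hcof β hβ
  obtain ⟨n, hn, hnn₀⟩ := hinf.exists_gt n₀
  exact ⟨α δ n, hn, lt_of_lt_of_le hn₀ (hmono.monotone hnn₀.le), hlt n⟩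

lemma cov_club {a : ℝ} {α : Ordinal.{0} → ℕ → Ordinal.{0}} {S W H : Set Ordinal.{0}}
    (ha : 0 < a) (hGS : GoodSeq S α) (hS : S ⊆ limOmega1) (hW : W ⊆ S)
    (hH : H ⊆ Set.Iio omega1) (hcov : Cov a α W H) {EE : Set Ordinal.{0}}
    (hEEH : EE ⊆ H) (hEEu : ¬ EE.Countable) {C : Set Ordinal.{0}} (hC : IsClubIn C) :
    ∃ δ ∈ W, δ ∈ C ∧ a ≤ ld α δ EE := by
  have hEE : EE ⊆ Set.Iio omega1 := hEEH.trans hH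
  set X := carve EE C '' Set.Iio omega1 with hX
  have hXEE : X ⊆ EE := by
    rintro x ⟨η, hη, rfl⟩
    exact (carve_spec hEE hEEu hC η hη).1
  have hXu : ¬ X.Countable :=
    image_uncountable ((carve_strictMonoOn hEE hEEu hC).injOn) Iio_omega1_uncountable
  obtain ⟨δ, hδW, hld⟩ := hcov X (hXEE.trans hEEH) hXu
  have hδS := hW hδW
  have hδlim := (hS hδS).2
  have hδω := (hS hδS).1
  refine ⟨δ, hδW, ?_, le_trans hld (ld_mono α δ hXEE)⟩
  exact thin_capture hEE hEEu hC hδω hδlim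
    (hits_cofinal hGS hδS (hits_infinite α δ X ha hld))

lemma ld_empty (α : Ordinal.{0} → ℕ → Ordinal.{0}) (δ : Ordinal.{0}) : ld α δ ∅ = 0 := by
  have : hitRatio (α δ) ∅ = fun _ => (0:ℝ) := by
    funext n; simp [hitRatio]
  unfold ld
  rw [this, Filter.liminf_const]

theorem main_lemma {a : ℝ} {α : Ordinal.{0} → ℕ → Ordinal.{0}} {S : Set Ordinal.{0}}
    (ha : 0 < a) (hGS : GoodSeq S α) (hS : S ⊆ limOmega1) :
    ∀ s : ℕ, ∀ W H : Set Ordinal.{0}, W ⊆ S → H ⊆ Set.Iio omega1 → ¬ H.Countable →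
      Cov a α W H → SB a α H s W → Concl a α W := by
  intro s
  induction s with
  | zero =>
    intro W H hW hH hHu hcov hsb
    obtain ⟨δ, hδW, hld⟩ := hcov H (le_refl _) hHu
    exact absurd (fun _ : Fin 1 => hld)
      (hsb δ hδW (fun _ => H) (fun _ => le_refl _)
        (fun x y hxy => absurd ((Fin.eq_zero x).trans (Fin.eq_zero y).symm) hxy))
  | succ s IH =>
    intro W H hW hH hHu hcov hsb
    classical
    obtain ⟨P, hP1, hP2⟩ := disjoint_subfamily hH hHu
    set E : Ordinal.{0} → Set Ordinal.{0} := Ordinal.lt_wf.fix (fun i rec =>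
      if h : ∃ B, B ⊆ P i ∧ ¬ B.Countable ∧
          ∀ δ ∈ W, (∃ k, ∃ hk : k < i, a ≤ ld α δ (rec k hk)) → ¬ a ≤ ld α δ B
      then Classical.choose h else ∅) with hE
    have hEeq : ∀ i, E i =
        if h : ∃ B, B ⊆ P i ∧ ¬ B.Countable ∧
            ∀ δ ∈ W, (∃ k, ∃ hk : k < i, a ≤ ld α δ (E k)) → ¬ a ≤ ld α δ B
        then Classical.choose h else ∅ := by
      intro i
      rw [hE]
      rw [Ordinal.lt_wf.fix_eq]
    set SuccP : Ordinal.{0} → Prop := fun i => ∃ B, B ⊆ P i ∧ ¬ B.Countable ∧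
        ∀ δ ∈ W, (∃ k, ∃ hk : k < i, a ≤ ld α δ (E k)) → ¬ a ≤ ld α δ B with hSuccP
    have hEspec : ∀ i, SuccP i → E i ⊆ P i ∧ ¬ (E i).Countable ∧
        ∀ δ ∈ W, (∃ k, ∃ hk : k < i, a ≤ ld α δ (E k)) → ¬ a ≤ ld α δ (E i) := by
      intro i h
      rw [hEeq i, dif_pos h]
      exact Classical.choose_spec h
    have hEempty : ∀ i, ¬ SuccP i → E i = ∅ := by
      intro i h
      rw [hEeq i, dif_neg h]
    by_cases hall : ∀ i, i < omega1 → SuccP i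
    · -- greedy succeeds
      refine ⟨fun i => {δ ∈ W | a ≤ ld α δ (E i)}, fun i => carve (E i) (Set.Iio omega1),
        ?_, ?_, ?_⟩
      · intro i _ δ hδ; exact hδ.1
      · intro i hi j hj hij
        rw [Set.disjoint_left]
        rintro δ ⟨hδW, hldi⟩ ⟨_, hldj⟩
        rcases lt_or_gt_of_ne hij with h | h
        · exact (hEspec j (hall j hj)).2.2 δ hδW ⟨i, h, hldi⟩ hldj
        · exact (hEspec i (hall i hi)).2.2 δ hδW ⟨j, h, hldj⟩ hldi
      · intro i hi
        obtain ⟨hEP, hEu, _⟩ := hEspec i (hall i hi)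
        have hEH : E i ⊆ H := hEP.trans (hP1 i hi).1
        have hEω : E i ⊆ Set.Iio omega1 := hEH.trans hH
        have hbmem : ∀ x < omega1, carve (E i) (Set.Iio omega1) x ∈ E i :=
          fun x hx => (carve_spec hEω hEu club_Iio x hx).1
        refine ⟨fun x hx => hEω (hbmem x hx), carve_strictMonoOn hEω hEu club_Iio, ?_⟩
        intro A hA hAu C hC
        set EE := carve (E i) (Set.Iio omega1) '' A with hEEdef
        have hEEEi : EE ⊆ E i := by
          rintro x ⟨y, hy, rfl⟩
          exact hbmem y (hA hy)
        have hEEu : ¬ EE.Countable :=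
          image_uncountable (((carve_strictMonoOn hEω hEu club_Iio).injOn).mono hA) hAu
        obtain ⟨δ, hδW, hδC, hld⟩ := cov_club ha hGS hS hW hH hcov
          (hEEEi.trans hEH) hEEu hC
        exact ⟨δ, ⟨hδW, le_trans hld (ld_mono α δ hEEEi)⟩, hδC, hld⟩
    · -- stuck: recurse
      push_neg at hall
      obtain ⟨i, hi, hnots⟩ := hall
      set N : Set Ordinal.{0} := {δ ∈ W | ∃ k, ∃ hk : k < i, a ≤ ld α δ (E k)} with hN
      have hnots' : ∀ B, B ⊆ P i → ¬ B.Countable →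
          ∃ δ ∈ W, (∃ k, ∃ hk : k < i, a ≤ ld α δ (E k)) ∧ a ≤ ld α δ B := by
        simp only [hSuccP] at hnots
        push_neg at hnots
        exact hnots
      have hcov' : Cov a α N (P i) := by
        intro B hBP hBu
        obtain ⟨δ, hδW, hex, hld⟩ := hnots' B hBP hBu
        exact ⟨δ, ⟨hδW, hex⟩, hld⟩
      have hsb' : SB a α (P i) s N := by
        rintro δ ⟨hδW, k, hki, hldk⟩ B hBP hBdisj hBld
        have hSk : SuccP k := by
          by_contra hc
          rw [hEempty k hc, ld_empty] at hldk
          linarith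
        have hEkP : E k ⊆ P k := (hEspec k hSk).1
        have hdisjPk : Disjoint (E k) (P i) :=
          Set.disjoint_of_subset hEkP (le_refl _) (hP2 k i (ne_of_lt hki))
        have hsub : ∀ j, (Fin.cons (E k) B : Fin (s+2) → Set Ordinal.{0}) j ⊆ H := by
          intro j
          refine Fin.cases ?_ ?_ j
          · rw [Fin.cons_zero]
            exact hEkP.trans ((hP1 k (hki.trans hi)).1)
          · intro j'
            rw [Fin.cons_succ]
            exact (hBP j').trans (hP1 i hi).1
        have hpair : Pairwise (Function.onFun Disjoint
            (Fin.cons (E k) B : Fin (s+2) → Set Ordinal.{0})) := by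
          intro x y hxy
          induction x using Fin.cases with
          | zero =>
            induction y using Fin.cases with
            | zero => exact absurd rfl hxy
            | succ y' =>
              simp only [Function.onFun, Fin.cons_zero, Fin.cons_succ]
              exact hdisjPk.mono_right (hBP y')
          | succ x' =>
            induction y using Fin.cases with
            | zero =>
              simp only [Function.onFun, Fin.cons_zero, Fin.cons_succ]
              exact (hdisjPk.mono_right (hBP x')).symm
            | succ y' =>
              simp only [Function.onFun, Fin.cons_succ]
              exact hBdisj (fun h => hxy (congrArg Fin.succ h))
        have hallj : ∀ j, a ≤ ld α δ ((Fin.cons (E k) B : Fin (s+2) → Set Ordinal.{0}) j) := by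
          intro j
          refine Fin.cases ?_ ?_ j
          · rw [Fin.cons_zero]; exact hldk
          · intro j'; rw [Fin.cons_succ]; exact hBld j'
        exact hsb δ hδW (Fin.cons (E k) B) hsub hpair hallj
      have hconcl := IH N (P i) (fun δ hδ => hW hδ.1) ((hP1 i hi).1.trans hH)
        (hP1 i hi).2 hcov' hsb'
      obtain ⟨T, b, hT1, hT2, hT3⟩ := hconcl
      exact ⟨T, b, fun i' hi' δ hδ => (hT1 i' hi' hδ).1, hT2, hT3⟩

lemma le_selfmap {b : Ordinal.{0} → Ordinal.{0}} (hbm : StrictMonoOn b (Set.Iio omega1)) :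
    ∀ x < omega1, x ≤ b x := by
  intro x
  induction x using Ordinal.induction with
  | _ x IH =>
  intro hx
  by_contra hc
  push_neg at hc
  have h2 : b (b x) < b x := hbm (hc.trans hx) hx hc
  have h3 : b x ≤ b (b x) := IH (b x) hc (hc.trans hx)
  exact absurd h2 (not_lt.mpr h3)

open scoped Classical in
noncomputable def pullback (b : Ordinal.{0} → Ordinal.{0}) (α : Ordinal.{0} → ℕ → Ordinal.{0})
    (δ : Ordinal.{0}) : ℕ → Ordinal.{0} :=
  if h : δ < omega1 ∧ (∀ x < δ, b x < δ) ∧ {n | α δ n ∈ b '' Set.Iio omega1}.Infinite then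
    fun n => Function.invFunOn b (Set.Iio omega1)
      (α δ (Nat.nth (fun m => α δ m ∈ b '' Set.Iio omega1) n))
  else α δ

lemma pullback_goodseq {b : Ordinal.{0} → Ordinal.{0}} {α : Ordinal.{0} → ℕ → Ordinal.{0}}
    {S : Set Ordinal.{0}} (hbm : StrictMonoOn b (Set.Iio omega1))
    (hGS : GoodSeq S α) (hS : S ⊆ limOmega1) :
    ∀ T ⊆ S, GoodSeq T (pullback b α) := by
  intro T hT δ hδT
  classical
  have hδS := hT hδT
  obtain ⟨hmono, hlt, hcof⟩ := hGS δ hδS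
  have hδω := (hS hδS).1
  unfold pullback
  by_cases h : δ < omega1 ∧ (∀ x < δ, b x < δ) ∧ {n | α δ n ∈ b '' Set.Iio omega1}.Infinite
  · rw [dif_pos h]
    obtain ⟨hδω', hclos, hinf⟩ := h
    set p : ℕ → Prop := fun m => α δ m ∈ b '' Set.Iio omega1 with hp
    have hnth : ∀ n, p (Nat.nth p n) := fun n => Nat.nth_mem_of_infinite hinf n
    set q : ℕ → Ordinal.{0} := fun n =>
      Function.invFunOn b (Set.Iio omega1) (α δ (Nat.nth p n)) with hq
    have hqmem : ∀ n, q n ∈ Set.Iio omega1 := by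
      intro n
      obtain ⟨x, hx, hbx⟩ := hnth n
      exact Function.invFunOn_mem ⟨x, hx, hbx⟩
    have hqeq : ∀ n, b (q n) = α δ (Nat.nth p n) := by
      intro n
      obtain ⟨x, hx, hbx⟩ := hnth n
      exact Function.invFunOn_eq ⟨x, hx, hbx⟩
    have hqlt : ∀ n, q n < δ := by
      intro n
      by_contra hcon
      push_neg at hcon
      have h1 : δ ≤ b (q n) := le_trans hcon (le_selfmap hbm _ (hqmem n))
      have h2 : b (q n) < δ := by rw [hqeq n]; exact hlt _
      exact absurd h2 (not_lt.mpr h1)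
    refine ⟨?_, hqlt, ?_⟩
    · intro n m hnm
      have h1 : b (q n) < b (q m) := by
        rw [hqeq n, hqeq m]
        exact hmono (Nat.nth_strictMono hinf hnm)
      rcases lt_trichotomy (q n) (q m) with h' | h' | h'
      · exact h'
      · rw [h'] at h1; exact absurd h1 (lt_irrefl _)
      · exact absurd (hbm (hqmem m) (hqmem n) h') (not_lt.mpr h1.le)
    · intro γ hγ
      have hbγ : b γ < δ := hclos γ hγ
      obtain ⟨n₀, hn₀⟩ := hcof (b γ) hbγ
      obtain ⟨m, hm, hmn₀⟩ := hinf.exists_gt n₀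
      set k := Nat.count p m with hk
      have hnthk : Nat.nth p k = m := Nat.nth_count hm
      refine ⟨k, ?_⟩
      have h1 : b γ < b (q k) := by
        rw [hqeq k, hnthk]
        exact hn₀.trans (hmono hmn₀)
      show γ < q k
      by_contra hcon
      push_neg at hcon
      rcases eq_or_lt_of_le hcon with h' | h'
      · rw [← h'] at h1; exact absurd h1 (lt_irrefl _)
      · exact absurd (h1.trans (hbm (hqmem k) (hγ.trans hδω') h')) (lt_irrefl _)
  · rw [dif_neg h]
    exact ⟨hmono, hlt, hcof⟩

lemma pullback_guess {b : Ordinal.{0} → Ordinal.{0}} {α : Ordinal.{0} → ℕ → Ordinal.{0}}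
    (hbm : StrictMonoOn b (Set.Iio omega1)) {δ : Ordinal.{0}} {A : Set Ordinal.{0}}
    (hA : A ⊆ Set.Iio omega1) (hδω : δ < omega1) (hclos : ∀ x < δ, b x < δ)
    {a : ℝ} (ha : 0 < a) (hld : a ≤ ld α δ (b '' A)) :
    a ≤ Filter.liminf (hitRatio (pullback b α δ) A) Filter.atTop := by
  classical
  have hsub : b '' A ⊆ b '' Set.Iio omega1 := Set.image_mono hA
  have hinfA : {n | α δ n ∈ b '' A}.Infinite := hits_infinite α δ _ ha hld
  have hinf : {n | α δ n ∈ b '' Set.Iio omega1}.Infinite :=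
    hinfA.mono (fun n hn => hsub hn)
  set p : ℕ → Prop := fun m => α δ m ∈ b '' Set.Iio omega1 with hp
  set q : ℕ → Ordinal.{0} := fun n =>
    Function.invFunOn b (Set.Iio omega1) (α δ (Nat.nth p n)) with hq
  have hpb : pullback b α δ = q := by
    unfold pullback
    rw [dif_pos ⟨hδω, hclos, hinf⟩]
  have hcount : ∀ n, 1 ≤ n → hitRatio (α δ) (b '' A) (Nat.nth p n) ≤ hitRatio q A n := by
    intro n hn1
    have hnthn : n ≤ Nat.nth p n := (Nat.nth_strictMono hinf).le_apply
    have hcard : ((Finset.range (Nat.nth p n)).filter (fun j => α δ j ∈ b '' A)).card ≤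
        ((Finset.range n).filter (fun k => q k ∈ A)).card := by
      apply Finset.card_le_card_of_injOn (fun j => Nat.count p j)
      · intro j hj
        simp only [Finset.mem_coe, Finset.mem_filter, Finset.mem_range] at hj ⊢
        obtain ⟨hjlt, hjA⟩ := hj
        have hpj : p j := hsub hjA
        have hnth_count : Nat.nth p (Nat.count p j) = j := Nat.nth_count hpj
        constructor
        · rw [← Nat.nth_lt_nth hinf, hnth_count]
          exact hjlt
        · obtain ⟨z, hz, hbz⟩ := hjA
          have h1 : q (Nat.count p j) = z := by
            rw [hq]
            simp only
            rw [hnth_count, ← hbz]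
            have h2 : b (Function.invFunOn b (Set.Iio omega1) (b z)) = b z :=
              Function.invFunOn_eq ⟨z, hA hz, rfl⟩
            have h3 : Function.invFunOn b (Set.Iio omega1) (b z) ∈ Set.Iio omega1 :=
              Function.invFunOn_mem ⟨z, hA hz, rfl⟩
            exact hbm.injOn h3 (hA hz) h2
          rw [h1]
          exact hz
      · intro j hj j' hj' hcc
        simp only [Finset.coe_filter, Set.mem_setOf_eq, Finset.mem_range] at hj hj'
        have hpj : p j := hsub hj.2
        have hpj' : p j' := hsub hj'.2
        have hcc' : Nat.count p j = Nat.count p j' := hcc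
        exact (Nat.nth_count hpj).symm.trans (by rw [hcc']; exact Nat.nth_count hpj')
    unfold hitRatio
    calc ((Finset.range (Nat.nth p n)).filter (fun j => α δ j ∈ b '' A)).card / (Nat.nth p n : ℝ)
        ≤ ((Finset.range (Nat.nth p n)).filter (fun j => α δ j ∈ b '' A)).card / (n : ℝ) := by
          exact div_le_div_of_nonneg_left (Nat.cast_nonneg _) (by exact_mod_cast hn1)
            (by exact_mod_cast hnthn)
    _ ≤ ((Finset.range n).filter (fun k => q k ∈ A)).card / (n : ℝ) := by
          gcongr
  rw [hpb]
  refine le_of_forall_pos_le_add fun ε hε => ?_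
  have hev := ld_eventually_gt α δ (b '' A) (show a - ε < a by linarith) hld
  rw [Filter.eventually_atTop] at hev
  obtain ⟨N, hN⟩ := hev
  have hev2 : ∀ᶠ n in Filter.atTop, a - ε ≤ hitRatio q A n := by
    rw [Filter.eventually_atTop]
    refine ⟨max N 1, fun n hn => ?_⟩
    have hn1 : 1 ≤ n := le_trans (le_max_right _ _) hn
    have hnN : N ≤ n := le_trans (le_max_left _ _) hn
    have h1 : a - ε < hitRatio (α δ) (b '' A) (Nat.nth p n) :=
      hN _ (le_trans hnN (Nat.nth_strictMono hinf).le_apply)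
    exact (le_of_lt h1).trans (hcount n hn1)
  have := Filter.le_liminf_of_le
    (Filter.isBoundedUnder_of ⟨1, hitRatio_le_one q A⟩).isCoboundedUnder_ge hev2
  linarith

/-- Lemma 6.3: if `♣_S^{inf ≥ a}` holds for a stationary `S ⊆ Lim(ω₁)`, then `S`
can be partitioned into `ω₁` many pairwise disjoint stationary sets `⟨S_i : i < ω₁⟩`
such that `♣_{S_i}^{inf ≥ a}` holds for each `i < ω₁`. -/
theorem clubSuitInf_partition (a : ℝ) (ha0 : 0 < a) (ha1 : a ≤ 1)
    (S : Set Ordinal.{0}) (hS : S ⊆ limOmega1) (hstat : IsStatIn S)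
    (h : ClubSuitInf S a) :
    ∃ T : Ordinal.{0} → Set Ordinal.{0},
      (∀ i, i < omega1 → ∀ j, j < omega1 → i ≠ j → Disjoint (T i) (T j)) ∧
      (⋃ i ∈ Set.Iio omega1, T i) = S ∧
      ∀ i, i < omega1 → IsStatIn (T i) ∧ ClubSuitInf (T i) a := by
  classical
  obtain ⟨α, hGS, hguess⟩ := h
  have hSIio : S ⊆ Set.Iio omega1 := fun x hx => (hS hx).1
  have hcov : Cov a α S (Set.Iio omega1) := by
    intro B hB hBu
    exact hguess B hB hBu
  set s₀ : ℕ := Nat.ceil (1/a) with hs₀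
  have hSB : SB a α (Set.Iio omega1) s₀ S := by
    intro δ hδ B hBH hBdisj hBld
    have hsum := slots_bound α δ B hBdisj ha0 hBld
    have hs : (1:ℝ)/a ≤ (s₀ : ℝ) := Nat.le_ceil _
    have : ((s₀ + 1 : ℕ) : ℝ) * a = (s₀:ℝ) * a + a := by push_cast; ring
    rw [this] at hsum
    have h1 : (1/a) * a = 1 := by field_simp
    nlinarith
  obtain ⟨T0, b, hT0W, hdisj0, hlens⟩ :=
    main_lemma ha0 hGS hS s₀ S (Set.Iio omega1) (le_refl _) (le_refl _)
      Iio_omega1_uncountable hcov hSB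
  set R : Set Ordinal.{0} := S \ ⋃ j ∈ Set.Iio omega1, T0 j with hR
  set T : Ordinal.{0} → Set Ordinal.{0} := fun i => if i = 0 then T0 0 ∪ R else T0 i with hT
  have hTsupT0 : ∀ i, i < omega1 → T0 i ⊆ T i := by
    intro i hi
    rw [hT]
    by_cases h0 : i = 0
    · rw [h0]; simp only [if_pos rfl]; exact Set.subset_union_left
    · simp only [if_neg h0]
      exact le_refl _
  have hTsubS : ∀ i, i < omega1 → T i ⊆ S := by
    intro i hi
    rw [hT]
    by_cases h0 : i = 0
    · rw [h0]; simp only [if_pos rfl]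
      exact Set.union_subset (hT0W 0 omega1_pos) Set.diff_subset
    · simp only [if_neg h0]; exact hT0W i hi
  refine ⟨T, ?_, ?_, ?_⟩
  · -- disjointness
    intro i hi j hj hij
    have key : ∀ k, k < omega1 → k ≠ 0 → Disjoint (T0 0 ∪ R) (T0 k) := by
      intro k hk hk0
      apply Set.disjoint_union_left.mpr
      constructor
      · exact hdisj0 0 omega1_pos k hk (fun hh => hk0 hh.symm)
      · rw [Set.disjoint_left]
        intro x hxR hxk
        exact hxR.2 (Set.mem_biUnion hk hxk)
    rw [hT]
    by_cases h0i : i = 0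
    · have h0j : j ≠ 0 := by
        intro hh
        exact hij (by rw [h0i, hh])
      simp only [if_pos h0i, if_neg h0j]
      exact key j hj h0j
    · by_cases h0j : j = 0
      · simp only [if_neg h0i, if_pos h0j]
        exact (key i hi h0i).symm
      · simp only [if_neg h0i, if_neg h0j]
        exact hdisj0 i hi j hj hij
  · -- union
    apply Set.Subset.antisymm
    · apply Set.iUnion₂_subset
      intro i hi
      exact hTsubS i hi
    · intro δ hδ
      by_cases hmem : δ ∈ ⋃ j ∈ Set.Iio omega1, T0 j
      · obtain ⟨j, hj, hδj⟩ := by simpa using hmem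
        exact Set.mem_biUnion hj (hTsupT0 j hj hδj)
      · have h0mem : (0:Ordinal.{0}) ∈ Set.Iio omega1 := omega1_pos
        apply Set.mem_biUnion h0mem
        rw [hT]
        simp only [if_pos rfl]
        exact Set.mem_union_right _ ⟨hδ, hmem⟩
  · -- per piece
    intro i hi
    obtain ⟨hbbd, hbmono, hguessi⟩ := hlens i hi
    have hTiS : T i ⊆ S := hTsubS i hi
    constructor
    · refine ⟨hTiS.trans hSIio, ?_⟩
      intro C hC
      obtain ⟨δ, hδT0, hδC, _⟩ := hguessi (Set.Iio omega1) (le_refl _)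
        Iio_omega1_uncountable C hC
      exact ⟨δ, hTsupT0 i hi hδT0, hδC⟩
    · refine ⟨pullback (b i) α, pullback_goodseq hbmono hGS hS (T i) hTiS, ?_⟩
      intro A hA hAu
      have hCb : IsClubIn {δ | δ < omega1 ∧ ∀ x < δ, b i x < δ} := club_Cb hbbd
      obtain ⟨δ, hδT0, hδCb, hld⟩ := hguessi A hA hAu _ hCb
      refine ⟨δ, hTsupT0 i hi hδT0, ?_⟩
      exact pullback_guess hbmono hA hδCb.1 hδCb.2 ha0 hld
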